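/- Let M = (Q, A, E, q₀, F) be an NFA with total transition relation and |Q| > 1, let [·] : Q → D^m be a code of length m ≥ 2 extended to paths via the canonical decomposition, and let F_{2m} be the set of all factors of length 2m of words [η'η''η'''] for consecutive m-paths η', η'', η''' of M. Then for every path η of M with |η| ≥ 3m, every factor of [η] of length 2m belongs to F_{2m}. -/

import Mathlib

/-- A (nonempty) path of the NFA with transition relation `E`: a nonempty list of
transitions, all in `E`, which are pairwise consecutive. -/
def IsPath {Q A : Type} (E : Set (Q × A × Q)) (η : List (Q × A × Q)) : Prop :=
  η ≠ [] ∧ (∀ e ∈ η, e ∈ E) ∧ List.Chain' (fun e f => e.2.2 = f.1) η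

/-- The origin of a path (as an `Option`, `none` for the empty path). -/
def origState {Q A : Type} (η : List (Q × A × Q)) : Option Q := η.head?.map (fun e => e.1)

/-- The end of a path (as an `Option`, `none` for the empty path). -/
def endState {Q A : Type} (η : List (Q × A × Q)) : Option Q := η.getLast?.map (fun e => e.2.2)

/-- The label of a path. -/
def pathLabel {Q A : Type} (η : List (Q × A × Q)) : List A := η.map (fun e => e.2.1)

/-- The language of the NFA `(Q, A, E, q₀, F)`: labels of paths from `q₀` to a
final state. -/
def nfaLang {Q A : Type} (E : Set (Q × A × Q)) (q0 : Q) (F : Set Q) : Set (List A) :=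
  {w | ∃ η, IsPath E η ∧ origState η = some q0 ∧ (∃ q ∈ F, endState η = some q) ∧
    w = pathLabel η}

/-- The transition relation `E` is total. -/
def TotalRel {Q A : Type} (E : Set (Q × A × Q)) : Prop := ∀ q a, ∃ p, (q, a, p) ∈ E

/-- A code of `Q` into `D` of length `m`: an injective map sending each state to
a word of length `m`. -/
def IsCode {Q D : Type} (m : ℕ) (c : Q → List D) : Prop :=
  Function.Injective c ∧ ∀ q, (c q).length = m

/-- A word `x ∈ D^{2m-1}` is factor-decodable: there is exactly one position `j`,
`1 ≤ j ≤ m`, such that the factor of `x` of length `m` starting at position `j`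
is a codeword. -/
def FactorDecodableWord {Q D : Type} (m : ℕ) (c : Q → List D) (x : List D) : Prop :=
  ∃! j : ℕ, 1 ≤ j ∧ j ≤ m ∧ ∃ q : Q, (x.drop (j - 1)).take m = c q

/-- The code `c` is factor-decodable: every factor of length `2m-1` of every
concatenation of codewords is factor-decodable. -/
def IsFactorDecodableCode {Q D : Type} (m : ℕ) (c : Q → List D) : Prop :=
  IsCode m c ∧
  ∀ l : List Q, l ≠ [] → ∀ x : List D, x.length = 2 * m - 1 →
    x <:+: (l.map c).flatten → FactorDecodableWord m c x

/-- Encoding of a path `η` of length `≤ m`: the unique word `z ∈ (A × D)^{|η|}`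
whose `A`-projection is the label of `η` and whose `D`-projection is the prefix
of length `|η|` of the codeword of the origin of `η` (the empty path encodes to
the empty word). -/
def encShort {Q A D : Type} (c : Q → List D) : List (Q × A × Q) → List (A × D)
  | [] => []
  | e :: t => (pathLabel (e :: t)).zip (c e.1)

/-- Encoding `[η]` of an arbitrary path `η`, obtained by encoding blockwise the
canonical decomposition of `η` into consecutive `m`-paths followed by one final
path of length `< m`. -/
def encPath {Q A D : Type} (c : Q → List D) (m : ℕ) (η : List (Q × A × Q)) :
    List (A × D) :=
  if h : η.length ≤ m ∨ m = 0 then encShort c η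
  else encShort c (η.take m) ++ encPath c m (η.drop m)
termination_by η.length
decreasing_by
  push_neg at h
  simp only [List.length_drop]
  omega

/-- The set `F_{2m}` of the path-encoding construction: all factors of length
`2m` of the encodings `[η'η''η''']` of three consecutive `m`-paths. -/
def Fset {Q A D : Type} (E : Set (Q × A × Q)) (c : Q → List D) (m : ℕ) :
    Set (List (A × D)) :=
  {w | ∃ η₁ η₂ η₃ : List (Q × A × Q),
    IsPath E (η₁ ++ η₂ ++ η₃) ∧ η₁.length = m ∧ η₂.length = m ∧ η₃.length = m ∧
    w.length = 2 * m ∧ w <:+: encPath c m (η₁ ++ η₂ ++ η₃)}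

/-- The set `I_{2m-1}` of the path-encoding construction: prefixes of length
`2m-1` of the encodings `[η'η'']` of two consecutive `m`-paths with
`δ([η']) = [q₀]`. -/
def Iset {Q A D : Type} (E : Set (Q × A × Q)) (q0 : Q) (c : Q → List D) (m : ℕ) :
    Set (List (A × D)) :=
  {w | ∃ η₁ η₂ : List (Q × A × Q),
    IsPath E (η₁ ++ η₂) ∧ η₁.length = m ∧ η₂.length = m ∧
    (encPath c m η₁).map Prod.snd = c q0 ∧
    w = (encPath c m (η₁ ++ η₂)).take (2 * m - 1)}

/-- The set `T_{2m-1}` of the path-encoding construction: suffixes of length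
`2m-1` of the encodings `[η'η''η''']` of consecutive paths with `|η'| = |η''| = m`,
`0 ≤ |η'''| < m` and `e(η''η''') ∈ F`. -/
def Tset {Q A D : Type} (E : Set (Q × A × Q)) (F : Set Q) (c : Q → List D) (m : ℕ) :
    Set (List (A × D)) :=
  {w | ∃ η₁ η₂ η₃ : List (Q × A × Q),
    IsPath E (η₁ ++ η₂ ++ η₃) ∧ η₁.length = m ∧ η₂.length = m ∧ η₃.length < m ∧
    (∃ q ∈ F, endState (η₂ ++ η₃) = some q) ∧
    w = (encPath c m (η₁ ++ η₂ ++ η₃)).drop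
      ((encPath c m (η₁ ++ η₂ ++ η₃)).length - (2 * m - 1))}

section
variable {Q A D : Type} (c : Q → List D) (m : ℕ) (hm : 0 < m) (hlen : ∀ q, (c q).length = m)

lemma zip_prefix {α β : Type} : ∀ (l₁ l₂ : List α) (z : List β), l₁ <+: l₂ → l₁.zip z <+: l₂.zip z
  | [], _, _, _ => by simp
  | a :: t₁, l₂, z, h => by
    obtain ⟨r, hr⟩ := h
    subst hr
    cases z with
    | nil => simp
    | cons b zt =>
      simp only [List.cons_append, List.zip_cons_cons]
      obtain ⟨w, hw⟩ := zip_prefix t₁ (t₁ ++ r) zt ⟨r, rfl⟩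
      exact ⟨w, by rw [List.cons_append, hw]⟩

lemma encShort_prefix : ∀ (η₁ η₂ : List (Q × A × Q)), η₁ <+: η₂ → encShort c η₁ <+: encShort c η₂ := by
  intro η₁ η₂ h
  cases η₁ with
  | nil => simp [encShort]
  | cons e t =>
    obtain ⟨r, hr⟩ := h
    subst hr
    simp only [encShort, List.cons_append]
    exact zip_prefix _ _ _ (by exact ⟨pathLabel r, by simp [pathLabel]⟩)

include hlen in
lemma encShort_length : ∀ (η : List (Q × A × Q)), (encShort c η).length = min η.length m := by
  intro η
  cases η with
  | nil => simp [encShort]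
  | cons e t => simp [encShort, pathLabel, hlen]

lemma encPath_short {η : List (Q × A × Q)} (h : η.length ≤ m) :
    encPath c m η = encShort c η := by
  rw [encPath, dif_pos (Or.inl h)]

lemma encPath_long {η : List (Q × A × Q)} (h : m < η.length) (hm : 0 < m) :
    encPath c m η = encShort c (η.take m) ++ encPath c m (η.drop m) := by
  rw [encPath, dif_neg (by omega)]

include hlen hm in
lemma encPath_length : ∀ (η : List (Q × A × Q)), (encPath c m η).length = η.length := by
  intro η
  by_cases h : η.length ≤ m
  · rw [encPath_short c m h, encShort_length c m hlen]; omega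
  · rw [encPath_long c m (by omega) hm]
    have := encPath_length (η.drop m)
    simp only [List.length_append, this, encShort_length c m hlen, List.length_take,
      List.length_drop]
    omega
termination_by η => η.length
decreasing_by simp only [List.length_drop]; omega

include hlen hm in
lemma encPath_append_prefix : ∀ (η ξ : List (Q × A × Q)),
    encPath c m η <+: encPath c m (η ++ ξ) := by
  intro η ξ
  by_cases h : η.length ≤ m
  · rw [encPath_short c m h]
    by_cases h2 : (η ++ ξ).length ≤ m
    · rw [encPath_short c m h2]
      exact encShort_prefix c η (η ++ ξ) ⟨ξ, rfl⟩
    · rw [encPath_long c m (by omega) hm]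
      refine (encShort_prefix c η ((η ++ ξ).take m) ?_).trans ⟨_, rfl⟩
      refine ⟨ξ.take (m - η.length), ?_⟩
      rw [List.take_append, List.take_of_length_le h]
  · rw [encPath_long c m (show m < η.length by omega) hm,
        encPath_long c m (show m < (η ++ ξ).length by simp; omega) hm,
        List.take_append_of_le_length (show m ≤ η.length by omega),
        List.drop_append_of_le_length (show m ≤ η.length by omega)]
    obtain ⟨w, hw⟩ := encPath_append_prefix (η.drop m) ξ
    exact ⟨w, by rw [List.append_assoc, hw]⟩
termination_by η => η.length
decreasing_by simp only [List.length_drop]; omega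
end

section
variable {Q A D : Type} (c : Q → List D) (m : ℕ) (hm : 0 < m) (hlen : ∀ q, (c q).length = m)

include hm hlen in
lemma encPath_drop_block (η : List (Q × A × Q)) :
    encPath c m (η.drop m) = (encPath c m η).drop m := by
  by_cases h : η.length ≤ m
  · rw [List.drop_eq_nil_of_le h, List.drop_eq_nil_of_le (by rw [encPath_length c m hm hlen]; omega)]
    rw [encPath_short c m (by simp)]
    rfl
  · rw [encPath_long c m (show m < η.length by omega) hm]
    rw [List.drop_left' (show (encShort c (η.take m)).length = m by
      rw [encShort_length c m hlen, List.length_take]; omega)]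

include hm hlen in
lemma encPath_drop_blocks : ∀ (s : ℕ) (η : List (Q × A × Q)),
    encPath c m (η.drop (s*m)) = (encPath c m η).drop (s*m) := by
  intro s
  induction s with
  | zero => simp
  | succ t ih =>
    intro η
    have h1 : (t+1)*m = m + t*m := by ring
    rw [h1, ← List.drop_drop, ← List.drop_drop, ih (η.drop m),
      encPath_drop_block c m hm hlen]

include hm hlen in
lemma encPath_take_blocks : ∀ (t : ℕ) (η : List (Q × A × Q)),
    encPath c m (η.take (t*m)) = (encPath c m η).take (t*m) := by
  intro t
  induction t with
  | zero => simp; rw [encPath_short c m (by simp)]; rfl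
  | succ t ih =>
    intro η
    have hmle : m ≤ (t+1)*m := Nat.le_mul_of_pos_left m (Nat.succ_pos t)
    by_cases h : η.length ≤ m
    · rw [List.take_of_length_le (le_trans h hmle),
        List.take_of_length_le (show (encPath c m η).length ≤ (t+1)*m by
          rw [encPath_length c m hm hlen]; exact le_trans h hmle)]
    · have hl2 : (encShort c (η.take m)).length = m := by
        rw [encShort_length c m hlen, List.length_take]; omega
      have hRHS : (encPath c m η).take ((t+1)*m)
          = encShort c (η.take m) ++ (encPath c m (η.drop m)).take (t*m) := by
        rw [encPath_long c m (show m < η.length by omega) hm, List.take_append,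
          hl2, List.take_of_length_le (by rw [hl2]; exact hmle),
          show (t+1)*m - m = t*m by simp [Nat.succ_mul]]
      rw [hRHS]
      by_cases ht : (η.take ((t+1)*m)).length ≤ m
      · have ht0 : t = 0 := by
          rcases Nat.eq_zero_or_pos t with h0 | h0
          · exact h0
          · exfalso
            have h2m : 2*m ≤ (t+1)*m := Nat.mul_le_mul_right m (by omega)
            rw [List.length_take] at ht
            omega
        subst ht0
        rw [encPath_short c m ht]
        norm_num
      · rw [encPath_long c m (show m < (η.take ((t+1)*m)).length by omega) hm,
          List.take_take, min_eq_left hmle, List.drop_take,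
          show (t+1)*m - m = t*m by simp [Nat.succ_mul], ih (η.drop m)]
end

lemma extend_path {Q A : Type} (E : Set (Q × A × Q)) (hTot : TotalRel E) (a0 : A) :
    ∀ (n : ℕ) (q : Q), ∃ ξ : List (Q × A × Q), ξ.length = n ∧ (∀ e ∈ ξ, e ∈ E) ∧
      List.Chain' (fun e f => e.2.2 = f.1) ξ ∧ (∀ h ∈ ξ.head?, h.1 = q) := by
  intro n
  induction n with
  | zero => intro q; exact ⟨[], rfl, by simp, List.isChain_nil, by simp⟩
  | succ n ih =>
    intro q
    obtain ⟨p, hp⟩ := hTot q a0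
    obtain ⟨ξ, hl, hE, hch, hhd⟩ := ih p
    refine ⟨(q, a0, p) :: ξ, by simp [hl], ?_, ?_, by simp⟩
    · intro e he
      rcases List.mem_cons.mp he with rfl | he
      · exact hp
      · exact hE e he
    · unfold List.Chain'
      rw [List.isChain_cons]
      exact ⟨fun z hz => (hhd z hz).symm, hch⟩

/-- **claim (*).** For every path `η` of `M` with `|η| ≥ 3m`,
every factor of `[η]` of length `2m` belongs to `F_{2m}`. -/
theorem factors_of_encoded_path {Q A D : Type} [Fintype Q]
    (E : Set (Q × A × Q)) (q0 : Q) (F : Set Q) (hq0 : q0 ∉ F)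
    (hTot : TotalRel E) (hn : 1 < Fintype.card Q)
    (m : ℕ) (hm : 2 ≤ m) (c : Q → List D) (hc : IsCode m c) :
    ∀ η : List (Q × A × Q), IsPath E η → 3 * m ≤ η.length →
      ∀ y : List (A × D), y.length = 2 * m → y <:+: encPath c m η →
        y ∈ Fset E c m := by
  intro η hη h3m y hy hyinf
  obtain ⟨hne, hE, hch⟩ := hη
  have hm0 : 0 < m := by omega
  obtain ⟨hcinj, hclen⟩ := hc
  obtain ⟨e0, he0⟩ := List.exists_mem_of_ne_nil η hne
  obtain ⟨ξ, hξlen, hξE, hξch, hξhd⟩ := extend_path E hTot e0.2.1 m ((η.getLast hne).2.2)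
  set η' := η ++ ξ with hη'
  have hη'len : η'.length = η.length + m := by simp [hη', hξlen]
  have hch' : List.Chain' (fun e f => e.2.2 = f.1) η' := by
    rw [hη']
    unfold List.Chain'
    rw [List.isChain_append]
    refine ⟨hch, hξch, ?_⟩
    intro x hx z hz
    rw [List.getLast?_eq_getLast hne, Option.mem_some_iff] at hx
    rw [hξhd z hz, ← hx]
  have hE' : ∀ e ∈ η', e ∈ E := by
    intro e he
    rcases List.mem_append.mp he with h | h
    exacts [hE e h, hξE e h]
  set L := encPath c m η' with hL
  have hLlen : L.length = η.length + m := by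
    rw [hL, encPath_length c m hm0 hclen, hη'len]
  obtain ⟨pre, suf, hsp⟩ := hyinf
  obtain ⟨rest, hrest⟩ := encPath_append_prefix c m hm0 hclen η ξ
  have hLsplit : L = pre ++ (y ++ (suf ++ rest)) := by
    rw [hL, hη', ← hrest, ← hsp]
    simp [List.append_assoc]
  set p := pre.length with hp
  have hplen : p + 2*m ≤ η.length := by
    have hlsp := congrArg List.length hsp
    simp only [List.length_append, hy, encPath_length c m hm0 hclen] at hlsp
    omega
  obtain ⟨k, r, hkr, hrm⟩ : ∃ k r, p = k*m + r ∧ r < m :=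
    ⟨p / m, p % m, by rw [Nat.mul_comm]; exact ((Nat.div_add_mod p m).symm), Nat.mod_lt p hm0⟩
  set K := k*m with hK
  set B := (η'.drop K).take (3*m) with hB
  have hBlen : B.length = 3*m := by
    rw [hB]
    simp only [List.length_take, List.length_drop]
    omega
  have hencB : encPath c m B = (L.drop K).take (3*m) := by
    rw [hB, hL, hK, encPath_take_blocks c m hm0 hclen 3 (η'.drop (k*m)),
      encPath_drop_blocks c m hm0 hclen k η']
  have hpd : (pre.drop K).length = p - K := by simp [hp]
  have hyW : y <:+: (L.drop K).take (3*m) := by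
    have hW : (L.drop K).take (3*m) = pre.drop K ++ (y ++ (suf ++ rest).take (m - r)) := by
      conv_lhs => rw [hLsplit, List.drop_append_of_le_length (show K ≤ pre.length by omega),
        List.take_append, List.take_append]
      rw [hpd, hy,
        List.take_of_length_le (show (pre.drop K).length ≤ 3*m by rw [hpd]; omega),
        List.take_of_length_le (show y.length ≤ 3*m - (p - K) by rw [hy]; omega),
        show 3*m - (p - K) - 2*m = m - r by omega]
    exact ⟨pre.drop K, (suf ++ rest).take (m - r), by rw [hW, List.append_assoc]⟩
  have hBeq : B.take m ++ (B.drop m).take m ++ B.drop (2*m) = B := by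
    have h1 : (B.drop m).take m ++ B.drop (2*m) = B.drop m := by
      rw [show 2*m = m + m by ring, ← List.drop_drop]
      exact List.take_append_drop m (B.drop m)
    rw [List.append_assoc, h1, List.take_append_drop]
  have hBinfix : B <:+: η' :=
    (List.take_prefix _ _).isInfix.trans (List.drop_suffix _ _).isInfix
  refine ⟨B.take m, (B.drop m).take m, B.drop (2*m), ?_, ?_, ?_, ?_, hy, ?_⟩
  · rw [hBeq]
    refine ⟨?_, ?_, hch'.infix hBinfix⟩
    · intro hBnil
      rw [hBnil] at hBlen
      simp at hBlen
      omega
    · intro e he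
      exact hE' e (hBinfix.mem he)
  · rw [List.length_take, hBlen]; omega
  · rw [List.length_take, List.length_drop, hBlen]; omega
  · rw [List.length_drop, hBlen]; omega
  · rw [hBeq, hencB]
    exact hyW
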